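/- Let μ be a positive measure supported in [0,∞) with finite moments s_n. Then μ is a finite combination of Dirac measures (has finite support) if and only if there exist p, k ∈ ℕ such that det((s_{i+j+p})_{0≤i,j≤k}) = 0. -/

import Mathlib

open MeasureTheory

/-- Any measurable real function is integrable w.r.t. a Dirac measure. -/
lemma integrable_dirac_of_measurable {f : ℝ → ℝ} (hf : Measurable f) (x : ℝ) :
    Integrable f (Measure.dirac x) := by
  refine ⟨hf.aestronglyMeasurable, ?_⟩
  rw [HasFiniteIntegral, lintegral_dirac]
  exact ENNReal.coe_lt_top

/-- A measure vanishing outside a finite set is the sum of its atoms. -/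
lemma measure_eq_sum_dirac (μ : Measure ℝ) (S : Finset ℝ)
    (hS : μ ((↑S : Set ℝ)ᶜ) = 0) :
    μ = ∑ x ∈ S, μ {x} • Measure.dirac x := by
  ext A hA
  have h1 : μ A = μ (A ∩ ↑S) := (measure_inter_conull hS).symm
  have h2 : A ∩ ↑S = ⋃ x ∈ S, A ∩ {x} := by
    ext t
    simp only [Set.mem_inter_iff, Set.mem_iUnion, Set.mem_singleton_iff, Finset.mem_coe]
    constructor
    · rintro ⟨h1, h2⟩; exact ⟨t, h2, h1, rfl⟩
    · rintro ⟨x, hx, h1, rfl⟩; exact ⟨h1, hx⟩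
  rw [h1, h2, measure_biUnion_finset]
  · rw [Measure.coe_finset_sum, Finset.sum_apply]
    refine Finset.sum_congr rfl fun x hx => ?_
    rw [Measure.smul_apply, Measure.dirac_apply' x hA, smul_eq_mul]
    by_cases hxA : x ∈ A
    · have : A ∩ {x} = {x} := by
        ext t; simp only [Set.mem_inter_iff, Set.mem_singleton_iff]
        constructor
        · tauto
        · rintro rfl; exact ⟨hxA, rfl⟩
      rw [this, Set.indicator_of_mem hxA, Pi.one_apply, mul_one]
    · have : A ∩ {x} = ∅ := by
        ext t; simp only [Set.mem_inter_iff, Set.mem_singleton_iff, Set.mem_empty_iff_false,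
          iff_false, not_and]
        rintro ht rfl; exact hxA ht
      rw [this, Set.indicator_of_notMem hxA, measure_empty, mul_zero]
  · intro x _ y _ hxy
    simp only [Function.onFun, Set.disjoint_left, Set.mem_inter_iff, Set.mem_singleton_iff]
    rintro t ⟨_, rfl⟩ ⟨_, h⟩
    exact hxy h
  · intro x _
    exact hA.inter (measurableSet_singleton x)

theorem finite_mass_iff_hankel_det_zero (μ : Measure ℝ)
    (hsupp : μ (Set.Iio 0) = 0)
    (hint : ∀ n : ℕ, Integrable (fun t : ℝ => t ^ n) μ) :
    (∃ (m : ℕ) (a : Fin m → ℝ) (x : Fin m → ℝ),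
        (∀ l, 0 < a l ∧ 0 ≤ x l) ∧
        μ = ∑ l : Fin m, (ENNReal.ofReal (a l)) • Measure.dirac (x l)) ↔
      ∃ p k : ℕ,
        (Matrix.of fun i j : Fin (k + 1) =>
          ∫ t, t ^ ((i : ℕ) + (j : ℕ) + p) ∂μ).det = 0 := by
  constructor
  · rintro ⟨m, a, x, hax, hμ⟩
    refine ⟨0, m, ?_⟩
    -- compute the moments
    have hmom : ∀ n : ℕ, ∫ t, t ^ n ∂μ = ∑ l : Fin m, a l * x l ^ n := by
      intro n
      rw [hμ, integral_finset_sum_measure]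
      · refine Finset.sum_congr rfl fun l _ => ?_
        rw [integral_smul_measure, integral_dirac, ENNReal.toReal_ofReal (hax l).1.le,
          smul_eq_mul]
      · intro l _
        exact (integrable_dirac_of_measurable (measurable_id.pow_const n)
          (x l)).smul_measure ENNReal.ofReal_ne_top
    set H : Matrix (Fin (m + 1)) (Fin (m + 1)) ℝ :=
      Matrix.of fun i j : Fin (m + 1) => ∫ t, t ^ ((i : ℕ) + (j : ℕ) + 0) ∂μ with hH
    set W : Matrix (Fin (m + 1)) (Fin m) ℝ :=
      Matrix.of fun i l => a l * x l ^ (i : ℕ) with hW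
    set V : Matrix (Fin m) (Fin (m + 1)) ℝ :=
      Matrix.of fun l j => x l ^ (j : ℕ) with hV
    have hHWV : H = W * V := by
      ext i j
      simp only [hH, Matrix.of_apply, Matrix.mul_apply, hW, hV]
      rw [hmom]
      refine Finset.sum_congr rfl fun l _ => ?_
      rw [Nat.add_zero, pow_add]
      ring
    -- find a nonzero kernel vector of V
    have hker : LinearMap.ker V.mulVecLin ≠ ⊥ := by
      intro hbot
      have h1 := V.mulVecLin.finrank_range_add_finrank_ker
      rw [hbot, finrank_bot, add_zero] at h1
      have h2 : Module.finrank ℝ (LinearMap.range V.mulVecLin) ≤ m := by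
        simpa [Module.finrank_fin_fun] using
          (LinearMap.range V.mulVecLin).finrank_le
      rw [Module.finrank_fin_fun] at h1
      omega
    obtain ⟨v, hvker, hv0⟩ := Submodule.exists_mem_ne_zero_of_ne_bot hker
    rw [LinearMap.mem_ker, Matrix.mulVecLin_apply] at hvker
    refine Matrix.exists_mulVec_eq_zero_iff.mp ⟨v, hv0, ?_⟩
    show H.mulVec v = 0
    rw [hHWV, ← Matrix.mulVec_mulVec, hvker, Matrix.mulVec_zero]
  · rintro ⟨p, k, hdet⟩
    obtain ⟨v, hv0, hvH⟩ := Matrix.exists_mulVec_eq_zero_iff.mpr hdet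
    -- the nonnegative function t^p * P(t)^2 has zero integral
    set f : ℝ → ℝ := fun t => t ^ p * (∑ i : Fin (k + 1), v i * t ^ (i : ℕ)) ^ 2 with hfdef
    have hf_eq : ∀ t : ℝ, f t =
        ∑ i : Fin (k + 1), ∑ j : Fin (k + 1), v i * v j * t ^ ((i : ℕ) + (j : ℕ) + p) := by
      intro t
      show t ^ p * (∑ i : Fin (k + 1), v i * t ^ (i : ℕ)) ^ 2 = _
      rw [sq, Finset.sum_mul_sum, Finset.mul_sum]
      refine Finset.sum_congr rfl fun i _ => ?_
      rw [Finset.mul_sum]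
      refine Finset.sum_congr rfl fun j _ => ?_
      rw [pow_add, pow_add]
      ring
    have hf_int : Integrable f μ := by
      rw [show f = fun t => ∑ i : Fin (k + 1), ∑ j : Fin (k + 1),
          v i * v j * t ^ ((i : ℕ) + (j : ℕ) + p) from funext hf_eq]
      exact integrable_finset_sum _ fun i _ =>
        integrable_finset_sum _ fun j _ => (hint _).const_mul _
    have hf_zero : ∫ t, f t ∂μ = 0 := by
      calc ∫ t, f t ∂μ
          = ∑ i : Fin (k + 1), ∑ j : Fin (k + 1),
              v i * v j * ∫ t, t ^ ((i : ℕ) + (j : ℕ) + p) ∂μ := by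
            rw [integral_congr_ae (Filter.Eventually.of_forall hf_eq)]
            rw [integral_finset_sum _ fun i _ =>
              integrable_finset_sum _ fun j _ => (hint _).const_mul _]
            refine Finset.sum_congr rfl fun i _ => ?_
            rw [integral_finset_sum _ fun j _ => (hint _).const_mul _]
            exact Finset.sum_congr rfl fun j _ => integral_const_mul _ _
        _ = ∑ i : Fin (k + 1), v i * ((Matrix.of fun i j : Fin (k + 1) =>
              ∫ t, t ^ ((i : ℕ) + (j : ℕ) + p) ∂μ).mulVec v i) := by
            refine Finset.sum_congr rfl fun i _ => ?_
            rw [Matrix.mulVec, dotProduct, Finset.mul_sum]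
            refine Finset.sum_congr rfl fun j _ => ?_
            simp only [Matrix.of_apply]
            ring
        _ = 0 := by rw [hvH]; simp
    have hae_nonneg : ∀ᵐ t ∂μ, (0 : ℝ) ≤ t := by
      have : ∀ᵐ t ∂μ, t ∉ Set.Iio (0 : ℝ) := by
        rw [ae_iff]
        simp only [not_not]; exact hsupp
      filter_upwards [this] with t ht
      simpa using ht
    have hf_nonneg : 0 ≤ᵐ[μ] f := by
      filter_upwards [hae_nonneg] with t ht
      exact mul_nonneg (pow_nonneg ht p) (sq_nonneg _)
    have hf_ae0 : f =ᵐ[μ] 0 :=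
      (integral_eq_zero_iff_of_nonneg_ae hf_nonneg hf_int).mp hf_zero
    -- the polynomial whose root set contains a.e. point
    set P : Polynomial ℝ := ∑ i : Fin (k + 1), Polynomial.C (v i) * Polynomial.X ^ (i : ℕ)
      with hP
    have hPeval : ∀ t : ℝ, P.eval t = ∑ i : Fin (k + 1), v i * t ^ (i : ℕ) := by
      intro t
      simp [hP, Polynomial.eval_finset_sum]
    have hPne : P ≠ 0 := by
      obtain ⟨i, hi⟩ := Function.ne_iff.mp hv0
      intro h
      apply hi
      have : P.coeff (i : ℕ) = v i := by
        rw [hP, Polynomial.finset_sum_coeff]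
        rw [Finset.sum_eq_single i]
        · simp
        · intro j _ hji
          simp only [Polynomial.coeff_C_mul, Polynomial.coeff_X_pow]
          rw [if_neg (fun hc => hji (Fin.val_injective hc.symm)), mul_zero]
        · simp
      rw [h] at this
      simp only [Polynomial.coeff_zero] at this
      exact this.symm
    set Q : Polynomial ℝ := Polynomial.X ^ p * P ^ 2 with hQ
    have hQne : Q ≠ 0 := by
      apply mul_ne_zero
      · exact pow_ne_zero _ Polynomial.X_ne_zero
      · exact pow_ne_zero _ hPne
    have hQeval : ∀ t : ℝ, Q.eval t = f t := by
      intro t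
      simp [hQ, hPeval, hfdef]
    have hfin : Set.Finite {t : ℝ | Q.IsRoot t} := Polynomial.finite_setOf_isRoot hQne
    set S : Finset ℝ := hfin.toFinset with hSdef
    have hSnull : μ ((↑S : Set ℝ)ᶜ) = 0 := by
      have hsub : ((↑S : Set ℝ)ᶜ) ⊆ {t : ℝ | f t ≠ 0} := by
        intro t ht
        simp only [hSdef, Set.mem_compl_iff, Finset.mem_coe, Set.Finite.mem_toFinset,
          Set.mem_setOf_eq, Polynomial.IsRoot] at ht
        simp only [Set.mem_setOf_eq]
        rw [← hQeval]
        exact ht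
      exact measure_mono_null hsub hf_ae0
    -- μ is a finite measure
    have hfinμ : μ Set.univ ≠ ⊤ := by
      have h0 := hint 0
      simp only [pow_zero] at h0
      rcases (integrable_const_iff).mp h0 with h | h
      · exact absurd h one_ne_zero
      · exact h.measure_univ_lt_top.ne
    have hdecomp := measure_eq_sum_dirac μ S hSnull
    -- keep only the atoms with positive mass
    classical
    set T : Finset ℝ := S.filter (fun x => μ {x} ≠ 0) with hT
    have hdecompT : μ = ∑ x ∈ T, μ {x} • Measure.dirac x := by
      refine hdecomp.trans (Finset.sum_subset (Finset.filter_subset _ _) ?_).symm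
      intro x hxS hx
      simp only [hT, Finset.mem_filter, not_and, not_not] at hx
      rw [hx hxS, zero_smul]
    have hmemT : ∀ x ∈ T, μ {x} ≠ 0 ∧ μ {x} ≠ ⊤ ∧ 0 ≤ x := by
      intro x hx
      simp only [hT, Finset.mem_filter] at hx
      refine ⟨hx.2, ?_, ?_⟩
      · exact ne_top_of_le_ne_top hfinμ (measure_mono (Set.subset_univ _))
      · by_contra hneg
        push_neg at hneg
        have : μ {x} ≤ μ (Set.Iio 0) := measure_mono (by
          intro t ht
          simp only [Set.mem_singleton_iff] at ht
          simpa [ht] using hneg)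
        rw [hsupp] at this
        exact hx.2 (le_antisymm this zero_le)
    refine ⟨T.card, fun l => (μ {((T.equivFin.symm l : T) : ℝ)}).toReal,
      fun l => ((T.equivFin.symm l : T) : ℝ), ?_, ?_⟩
    · intro l
      obtain ⟨h1, h2, h3⟩ := hmemT _ (T.equivFin.symm l).2
      exact ⟨ENNReal.toReal_pos h1 h2, h3⟩
    · have hsum : ∑ l : Fin T.card,
          ENNReal.ofReal (μ {((T.equivFin.symm l : T) : ℝ)}).toReal •
            Measure.dirac ((T.equivFin.symm l : T) : ℝ)
          = ∑ x ∈ T, μ {x} • Measure.dirac x := by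
        rw [← Finset.sum_coe_sort T (fun x => μ {x} • Measure.dirac x)]
        refine (Fintype.sum_equiv T.equivFin _ _ fun a => ?_).symm
        rw [Equiv.symm_apply_apply, ENNReal.ofReal_toReal (hmemT _ a.2).2.1]
      exact hdecompT.trans hsum.symm
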